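/- Let u ∈ ℚ with u ≠ 0, let qv, qw, qx, qy, qz ∈ ℚ (the squares of the remaining edge-lengths), let d ∈ ℚ with d ≠ 0 satisfy 16·d^2 = 2u²·qv + 2u²·qw + 2·qv·qw − u⁴ − qv² − qw², and let e ∈ ℚ satisfy 288·e^2 = det !![0,1,1,1,1; 1,0,u²,qv,qx; 1,u²,0,qw,qy; 1,qv,qw,0,qz; 1,qx,qy,qz,0]. Then there exist points P, Q, R, S : Fin 3 → ℚ with ∑(Q−P)² = u², ∑(R−P)² = qv, ∑(R−Q)² = qw, ∑(S−P)² = qx, ∑(S−Q)² = qy, ∑(S−R)² = qz. -/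

import Mathlib

set_option maxHeartbeats 2000000 in
private lemma detfive (u qv qw qx qy qz : ℚ) :
    Matrix.det !![(0:ℚ), 1, 1, 1, 1;
         1, 0, u ^ 2, qv, qx;
         1, u ^ 2, 0, qw, qy;
         1, qv, qw, 0, qz;
         1, qx, qy, qz, 0] =
    - 2*qw*qy*qz + 2*qw*qx*qz + 2*qw*qx*qy - 2*qw*qx^2 - 2*qw^2*qx + 2*qv*qy*qz
    - 2*qv*qy^2 - 2*qv*qx*qz + 2*qv*qx*qy + 2*qv*qw*qy + 2*qv*qw*qx - 2*qv^2*qy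
    - 2*u^2*qz^2 + 2*u^2*qy*qz + 2*u^2*qx*qz - 2*u^2*qx*qy + 2*u^2*qw*qz
    + 2*u^2*qw*qx + 2*u^2*qv*qz + 2*u^2*qv*qy - 2*u^2*qv*qw - 2*u^4*qz := by
  simp [Matrix.det_succ_row_zero, Fin.sum_univ_succ, Matrix.submatrix_apply,
    Fin.succAbove]
  ring

/-- Rational embedding of a tetrahedron: rational edge-length squares together with a
rational flag (edge `u`, face area `d`, volume `e`, with `u`, `d` nonzero) suffice for
a pose with rational coordinates in `ℚ³`. -/
theorem tetrahedron_rational_embedding (u qv qw qx qy qz : ℚ)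
    (hu : u ≠ 0) (d : ℚ) (hd : d ≠ 0)
    (hface : 16 * d ^ 2 =
      2 * u ^ 2 * qv + 2 * u ^ 2 * qw + 2 * qv * qw - u ^ 4 - qv ^ 2 - qw ^ 2)
    (e : ℚ)
    (hvol : 288 * e ^ 2 = Matrix.det
      !![0, 1, 1, 1, 1;
         1, 0, u ^ 2, qv, qx;
         1, u ^ 2, 0, qw, qy;
         1, qv, qw, 0, qz;
         1, qx, qy, qz, 0]) :
    ∃ P Q R S : Fin 3 → ℚ,
      (∑ k, (Q k - P k) ^ 2 = u ^ 2) ∧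
      (∑ k, (R k - P k) ^ 2 = qv) ∧
      (∑ k, (R k - Q k) ^ 2 = qw) ∧
      (∑ k, (S k - P k) ^ 2 = qx) ∧
      (∑ k, (S k - Q k) ^ 2 = qy) ∧
      (∑ k, (S k - R k) ^ 2 = qz) := by
  rw [detfive] at hvol
  refine ⟨![0,0,0], ![u,0,0],
    ![(u^2+qv-qw)/(2*u), 2*d/u, 0],
    ![(u^2+qx-qy)/(2*u), (2*u^2*(qx+qv-qz)-(u^2+qv-qw)*(u^2+qx-qy))/(8*u*d), 3*e/d],
    ?_, ?_, ?_, ?_, ?_, ?_⟩ <;>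
    simp only [Fin.sum_univ_three, Matrix.cons_val_zero, Matrix.cons_val_one,
      Matrix.head_cons, Matrix.cons_val_two, Matrix.tail_cons]
  · ring
  · field_simp
    linear_combination hface
  · field_simp
    linear_combination hface
  · field_simp
    linear_combination (4*qy^2 - 8*qx*qy + 4*qx^2
      - 8*u^2*qy - 8*u^2*qx + 4*u^4) * hface + 8*u^2 * hvol
  · field_simp
    linear_combination (4*qy^2 - 8*qx*qy + 4*qx^2
      - 8*u^2*qy - 8*u^2*qx + 4*u^4) * hface + 8*u^2 * hvol
  · field_simp
    linear_combination (64*d^2 + 4*qy^2 - 8*qx*qy + 4*qx^2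
      - 8*u^2*qy - 8*u^2*qx + 4*u^4) * hface + 8*u^2 * hvol
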